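/- A finite partial cube with more than one vertex is peripheral (every vertex lies in some periphery W_ab with W_ab = U_ab) if and only if it is isomorphic to the Cartesian product of a partial cube with K_2. -/

import Mathlib

open SimpleGraph

universe u

variable {V : Type u}

/-- The geodesic interval between two vertices: the set of vertices lying on
shortest paths between them. -/
def gInterval (G : SimpleGraph V) (x y : V) : Set V :=
  {z | G.dist x z + G.dist z y = G.dist x y}

/-- A set of vertices is (geodesically) convex. -/
def GConvex (G : SimpleGraph V) (C : Set V) : Prop :=
  ∀ x ∈ C, ∀ y ∈ C, gInterval G x y ⊆ C

/-- `Wside G a b` is the set `W_ab` of vertices strictly closer to `a` than to `b`. -/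
def Wside (G : SimpleGraph V) (a b : V) : Set V :=
  {x | G.dist a x < G.dist b x}

/-- `Uside G a b` is the set `U_ab` of vertices of `W_ab` having a neighbour in `W_ba`. -/
def Uside (G : SimpleGraph V) (a b : V) : Set V :=
  {x | x ∈ Wside G a b ∧ ∃ y, G.Adj x y ∧ y ∈ Wside G b a}

/-- A graph is bipartite if it admits a proper 2-colouring. -/
def IsBipartiteGraph (G : SimpleGraph V) : Prop :=
  ∃ c : V → Bool, ∀ u v, G.Adj u v → c u ≠ c v

/-- A partial cube: a connected bipartite graph all of whose half-spaces `W_ab`, `W_ba`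
are convex (Djoković's characterization). -/
def IsPartialCube (G : SimpleGraph V) : Prop :=
  G.Connected ∧ IsBipartiteGraph G ∧
    ∀ a b, G.Adj a b → GConvex G (Wside G a b) ∧ GConvex G (Wside G b a)

/-- The Djoković–Winkler relation Θ between (unordered) edges. -/
def ThetaRel (G : SimpleGraph V) (e f : Sym2 V) : Prop :=
  ∃ x y u v : V, e = s(x, y) ∧ f = s(u, v) ∧
    G.dist x u + G.dist y v ≠ G.dist x v + G.dist y u

/-- The geodesic convex hull of a set of vertices. -/
def gConvexHull (G : SimpleGraph V) (A : Set V) : Set V :=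
  ⋂₀ {C : Set V | GConvex G C ∧ A ⊆ C}

section Aux

variable {G : SimpleGraph V}

lemma walk_parity {c : V → Bool} (hc : ∀ u v, G.Adj u v → c u ≠ c v)
    {u v : V} (p : G.Walk u v) : (c u = c v) ↔ Even p.length := by
  induction p with
  | nil => simp
  | @cons u w v h p ih =>
    have hcu := hc _ _ h
    simp only [Walk.length_cons, Nat.even_add_one, ← ih]
    cases hu : c u <;> cases hw : c w <;> cases hv : c v <;> simp_all

lemma dist_parity (hconn : G.Connected) {c : V → Bool} (hc : ∀ u v, G.Adj u v → c u ≠ c v)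
    (u v : V) : (c u = c v) ↔ Even (G.dist u v) := by
  obtain ⟨p, hp⟩ := hconn.exists_walk_length_eq_dist u v
  rw [← hp]; exact walk_parity hc p

lemma adj_dist_succ (hconn : G.Connected) {c : V → Bool}
    (hc : ∀ u v, G.Adj u v → c u ≠ c v) {a b : V} (hab : G.Adj a b) (x : V) :
    G.dist a x = G.dist b x + 1 ∨ G.dist b x = G.dist a x + 1 := by
  have h1 : G.dist a x ≤ G.dist a b + G.dist b x := hconn.dist_triangle
  have h2 : G.dist b x ≤ G.dist b a + G.dist a x := hconn.dist_triangle
  have hab1 : G.dist a b = 1 := dist_eq_one_iff_adj.mpr hab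
  have hba1 : G.dist b a = 1 := dist_eq_one_iff_adj.mpr hab.symm
  have hne : G.dist a x ≠ G.dist b x := by
    intro h
    have p1 := dist_parity hconn hc a x
    have p2 := dist_parity hconn hc b x
    rw [h] at p1
    have hiff : (c a = c x) ↔ (c b = c x) := by rw [p1, p2]
    have := hc _ _ hab
    cases ha : c a <;> cases hb : c b <;> cases hx : c x <;> simp_all
  omega

/-- dichotomy -/
lemma mem_Wside_or (hconn : G.Connected) {c : V → Bool}
    (hc : ∀ u v, G.Adj u v → c u ≠ c v) {a b : V} (hab : G.Adj a b) (x : V) :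
    x ∈ Wside G a b ↔ x ∉ Wside G b a := by
  have := adj_dist_succ hconn hc hab x
  simp only [Wside, Set.mem_setOf_eq]
  omega

lemma Wside_disj {a b x : V} (h1 : x ∈ Wside G a b) (h2 : x ∈ Wside G b a) : False := by
  simp only [Wside, Set.mem_setOf_eq] at h1 h2; omega

/-- unique cross neighbour -/
lemma cross_unique (hG : IsPartialCube G) {a b x x' y : V} (hab : G.Adj a b)
    (hx : x ∈ Wside G a b) (hx' : x' ∈ Wside G a b) (hy : y ∈ Wside G b a)
    (h1 : G.Adj x y) (h2 : G.Adj x' y) : x = x' := by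
  obtain ⟨hconn, ⟨c, hc⟩, hcvx⟩ := hG
  by_contra hne
  have d2 : G.dist x x' = 2 := by
    have hle : G.dist x x' ≤ G.dist x y + G.dist y x' := hconn.dist_triangle
    have e1 : G.dist x y = 1 := dist_eq_one_iff_adj.mpr h1
    have e2 : G.dist y x' = 1 := dist_eq_one_iff_adj.mpr h2.symm
    have hne1 : G.dist x x' ≠ 1 := by
      intro h
      have hadj : G.Adj x x' := dist_eq_one_iff_adj.mp h
      have := hc _ _ hadj
      have c1 := hc _ _ h1
      have c2 := hc _ _ h2
      cases hxc : c x <;> cases hxc' : c x' <;> cases hyc : c y <;> simp_all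
    have hne0 : G.dist x x' ≠ 0 := by
      intro h0; exact hne (hconn.dist_eq_zero_iff.mp h0)
    omega
  have hyI : y ∈ gInterval G x x' := by
    simp only [gInterval, Set.mem_setOf_eq, d2]
    rw [dist_eq_one_iff_adj.mpr h1, dist_eq_one_iff_adj.mpr h2.symm]
  exact Wside_disj ((hcvx a b hab).1 x hx x' hx' hyI) hy

end Aux

section Aux2

variable {G : SimpleGraph V}

lemma Wside_sub (hG : IsPartialCube G) {a b w y : V} (hab : G.Adj a b)
    (hwy : G.Adj w y) (hw : w ∈ Wside G a b) (hy : y ∈ Wside G b a) :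
    Wside G w y ⊆ Wside G a b := by
  obtain ⟨hconn, ⟨c, hc⟩, hcvx⟩ := id hG
  intro x hx
  rw [mem_Wside_or hconn hc hab]
  intro hxba
  have hwI : w ∈ gInterval G y x := by
    simp only [gInterval, Set.mem_setOf_eq]
    have h1 : G.dist y w = 1 := dist_eq_one_iff_adj.mpr hwy.symm
    have h2 := adj_dist_succ hconn hc hwy x
    simp only [Wside, Set.mem_setOf_eq] at hx
    omega
  exact Wside_disj hw ((hcvx a b hab).2 y hy x hxba hwI)

lemma splits_eq (hG : IsPartialCube G) {a b w y : V} (hab : G.Adj a b)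
    (hwy : G.Adj w y) (hw : w ∈ Wside G a b) (hy : y ∈ Wside G b a) :
    Wside G w y = Wside G a b := by
  obtain ⟨hconn, ⟨c, hc⟩, -⟩ := id hG
  apply Set.Subset.antisymm (Wside_sub hG hab hwy hw hy)
  intro x hx
  rw [mem_Wside_or hconn hc hwy]
  intro hyw
  exact Wside_disj hx (Wside_sub hG hab.symm hwy.symm hy hw hyw)

lemma match_adj (hG : IsPartialCube G) {a b x x' y y' : V} (hab : G.Adj a b)
    (hx : x ∈ Wside G a b) (hx' : x' ∈ Wside G a b)
    (hy : y ∈ Wside G b a) (hy' : y' ∈ Wside G b a)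
    (hxy : G.Adj x y) (hxy' : G.Adj x' y') (hxx' : G.Adj x x') : G.Adj y y' := by
  obtain ⟨hconn, ⟨c, hc⟩, hcvx⟩ := id hG
  have hyx' : G.dist y x' = 2 := by
    have hle : G.dist y x' ≤ G.dist y x + G.dist x x' := hconn.dist_triangle
    have e1 : G.dist y x = 1 := dist_eq_one_iff_adj.mpr hxy.symm
    have e2 : G.dist x x' = 1 := dist_eq_one_iff_adj.mpr hxx'
    have hne1 : G.dist y x' ≠ 1 := by
      intro h
      exact hxx'.ne (cross_unique hG hab hx hx' hy hxy (dist_eq_one_iff_adj.mp h).symm)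
    have hne0 : G.dist y x' ≠ 0 := by
      intro h0
      exact Wside_disj (hconn.dist_eq_zero_iff.mp h0 ▸ hx') hy
    omega
  have hle3 : G.dist y y' ≤ 3 := by
    have hle : G.dist y y' ≤ G.dist y x' + G.dist x' y' := hconn.dist_triangle
    rw [hyx', dist_eq_one_iff_adj.mpr hxy'] at hle
    exact hle
  have hodd : ¬ Even (G.dist y y') := by
    rw [← dist_parity hconn hc]
    have c1 := hc _ _ hxy
    have c2 := hc _ _ hxy'
    have c3 := hc _ _ hxx'
    cases h1 : c y <;> cases h2 : c y' <;> cases h3 : c x <;> cases h4 : c x' <;> simp_all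
  have hne3 : G.dist y y' ≠ 3 := by
    intro h3
    have hx'I : x' ∈ gInterval G y y' := by
      simp only [gInterval, Set.mem_setOf_eq, h3, hyx', dist_eq_one_iff_adj.mpr hxy']
    exact Wside_disj hx' ((hcvx a b hab).2 y hy y' hy' hx'I)
  rw [← dist_eq_one_iff_adj]
  rw [Nat.even_iff] at hodd
  omega

end Aux2
section Aux3

variable {G : SimpleGraph V}

lemma induce_walk {s : Set V} :
    ∀ {x y : V} (p : G.Walk x y) (hp : ∀ z ∈ p.support, z ∈ s),
    ∃ q : (G.induce s).Walk ⟨x, hp x p.start_mem_support⟩ ⟨y, hp y p.end_mem_support⟩,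
      q.length = p.length := by
  intro x y p
  induction p with
  | nil => exact fun hp => ⟨.nil, rfl⟩
  | @cons u w v h p ih =>
    intro hp
    obtain ⟨q, hq⟩ := ih (fun z hz => hp z (by simp [hz]))
    have hadj : (G.induce s).Adj ⟨u, hp u (by simp)⟩ ⟨w, hp w (by simp)⟩ := h
    exact ⟨.cons hadj q, by simp [hq]⟩

lemma support_mem_gInterval (hconn : G.Connected) {x y z : V} (p : G.Walk x y)
    (hp : p.length = G.dist x y) (hz : z ∈ p.support) : z ∈ gInterval G x y := by
  classical
  have hspec := p.take_spec hz
  have hlen : (p.takeUntil z hz).length + (p.dropUntil z hz).length = p.length := by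
    rw [← Walk.length_append, hspec]
  have h1 : G.dist x z ≤ (p.takeUntil z hz).length := dist_le _
  have h2 : G.dist z y ≤ (p.dropUntil z hz).length := dist_le _
  have h3 : G.dist x y ≤ G.dist x z + G.dist z y := hconn.dist_triangle
  simp only [gInterval, Set.mem_setOf_eq]
  omega

lemma dist_induce (hconn : G.Connected) {s : Set V} (hcvx : GConvex G s)
    {x y : V} (hx : x ∈ s) (hy : y ∈ s) :
    (G.induce s).dist ⟨x, hx⟩ ⟨y, hy⟩ = G.dist x y := by
  obtain ⟨p, hp⟩ := hconn.exists_walk_length_eq_dist x y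
  have hsupp : ∀ z ∈ p.support, z ∈ s := fun z hz =>
    hcvx x hx y hy (support_mem_gInterval hconn p hp hz)
  obtain ⟨q, hq⟩ := induce_walk p hsupp
  have hreach : (G.induce s).Reachable ⟨x, hx⟩ ⟨y, hy⟩ := ⟨q⟩
  apply le_antisymm
  · calc (G.induce s).dist ⟨x, hx⟩ ⟨y, hy⟩ ≤ q.length := dist_le q
      _ = G.dist x y := by rw [hq, hp]
  · obtain ⟨q', hq'⟩ := hreach.exists_walk_length_eq_dist
    calc G.dist x y ≤ (q'.map (Embedding.induce s).toHom).length := dist_le _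
      _ = (G.induce s).dist ⟨x, hx⟩ ⟨y, hy⟩ := by rw [Walk.length_map, hq']

lemma induce_reachable (hconn : G.Connected) {s : Set V} (hcvx : GConvex G s)
    {x y : V} (hx : x ∈ s) (hy : y ∈ s) :
    (G.induce s).Reachable ⟨x, hx⟩ ⟨y, hy⟩ := by
  obtain ⟨p, hp⟩ := hconn.exists_walk_length_eq_dist x y
  have hsupp : ∀ z ∈ p.support, z ∈ s := fun z hz =>
    hcvx x hx y hy (support_mem_gInterval hconn p hp hz)
  obtain ⟨q, -⟩ := induce_walk p hsupp
  exact ⟨q⟩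

lemma Wside_induce_iff (hconn : G.Connected) {s : Set V} (hcvx : GConvex G s)
    {u v z : V} {hu : u ∈ s} {hv : v ∈ s} {hz : z ∈ s} :
    (⟨z, hz⟩ ∈ Wside (G.induce s) ⟨u, hu⟩ ⟨v, hv⟩) ↔ z ∈ Wside G u v := by
  show (G.induce s).dist ⟨u, hu⟩ ⟨z, hz⟩ < (G.induce s).dist ⟨v, hv⟩ ⟨z, hz⟩ ↔ _
  rw [dist_induce hconn hcvx, dist_induce hconn hcvx]
  exact Iff.rfl

lemma gInterval_induce_iff (hconn : G.Connected) {s : Set V} (hcvx : GConvex G s)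
    {u v z : V} {hu : u ∈ s} {hv : v ∈ s} {hz : z ∈ s} :
    (⟨z, hz⟩ ∈ gInterval (G.induce s) ⟨u, hu⟩ ⟨v, hv⟩) ↔ z ∈ gInterval G u v := by
  show (G.induce s).dist ⟨u, hu⟩ ⟨z, hz⟩ + (G.induce s).dist ⟨z, hz⟩ ⟨v, hv⟩
      = (G.induce s).dist ⟨u, hu⟩ ⟨v, hv⟩ ↔ _
  rw [dist_induce hconn hcvx, dist_induce hconn hcvx, dist_induce hconn hcvx]
  exact Iff.rfl

lemma induce_partialCube (hG : IsPartialCube G) {a b : V} (hab : G.Adj a b) :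
    IsPartialCube (G.induce (Wside G a b)) := by
  obtain ⟨hconn, ⟨c, hc⟩, hcvx⟩ := id hG
  have hscvx : GConvex G (Wside G a b) := (hcvx a b hab).1
  have hmem_a : a ∈ Wside G a b := by
    simp only [Wside, Set.mem_setOf_eq, dist_self, dist_eq_one_iff_adj.mpr hab.symm]
    omega
  refine ⟨(connected_iff _).mpr ⟨fun x y => ?_, ⟨⟨a, hmem_a⟩⟩⟩,
    ⟨fun v => c v.1, fun u v huv => hc _ _ huv⟩, ?_⟩
  · obtain ⟨x, hx⟩ := x; obtain ⟨y, hy⟩ := y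
    exact induce_reachable hconn hscvx hx hy
  · rintro ⟨u, hu⟩ ⟨v, hv⟩ huv
    have huv' : G.Adj u v := huv
    constructor
    · rintro ⟨z1, hz1⟩ h1 ⟨z2, hz2⟩ h2 ⟨m, hm⟩ hmI
      rw [Wside_induce_iff hconn hscvx] at h1 h2 ⊢
      rw [gInterval_induce_iff hconn hscvx] at hmI
      exact (hcvx u v huv').1 z1 h1 z2 h2 hmI
    · rintro ⟨z1, hz1⟩ h1 ⟨z2, hz2⟩ h2 ⟨m, hm⟩ hmI
      rw [Wside_induce_iff hconn hscvx] at h1 h2 ⊢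
      rw [gInterval_induce_iff hconn hscvx] at hmI
      exact (hcvx u v huv').2 z1 h1 z2 h2 hmI

end Aux3
section Aux4

variable {G : SimpleGraph V} {V' : Type*} {G' : SimpleGraph V'}

lemma iso_dist_le (e : G ≃g G') (u v : V) : G'.dist (e u) (e v) ≤ G.dist u v := by
  by_cases hr : G.Reachable u v
  · obtain ⟨p, hp⟩ := hr.exists_walk_length_eq_dist
    calc G'.dist (e u) (e v) ≤ (p.map e.toHom).length := dist_le _
      _ = G.dist u v := by rw [Walk.length_map, hp]
  · have hr' : ¬ G'.Reachable (e u) (e v) := fun h => hr (Iso.reachable_iff.mp h)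
    rw [dist_eq_zero_of_not_reachable hr']
    exact Nat.zero_le _
  
lemma iso_dist (e : G ≃g G') (u v : V) : G'.dist (e u) (e v) = G.dist u v := by
  apply le_antisymm (iso_dist_le e u v)
  have := iso_dist_le e.symm (e u) (e v)
  simpa using this

/-- distance in boxProd with K2 -/
noncomputable def kdist (i j : Fin 2) : ℕ := if i = j then 0 else 1

lemma boxProd_walk_lb {W' : Type*} {H : SimpleGraph W'} (hH : H.Connected)
    {u v : W' × Fin 2} (p : (H.boxProd (⊤ : SimpleGraph (Fin 2))).Walk u v) :
    H.dist u.1 v.1 + kdist u.2 v.2 ≤ p.length := by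
  induction p with
  | nil => simp [kdist, dist_self]
  | @cons u m v h p ih =>
    rw [boxProd_adj] at h
    rcases h with ⟨h1, h2⟩ | ⟨h1, h2⟩
    · have ht : H.dist u.1 v.1 ≤ H.dist u.1 m.1 + H.dist m.1 v.1 := hH.dist_triangle
      rw [dist_eq_one_iff_adj.mpr h1] at ht
      have hk : kdist u.2 v.2 = kdist m.2 v.2 := by rw [h2]
      simp only [Walk.length_cons]
      omega
    · have hk : kdist u.2 v.2 ≤ 1 := by unfold kdist; split <;> omega
      have hk2 : (0:ℕ) ≤ kdist m.2 v.2 := Nat.zero_le _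
      rw [h2] at *
      simp only [Walk.length_cons]
      omega

lemma boxProd_dist {W' : Type*} {H : SimpleGraph W'} (hH : H.Connected)
    (p q : W' × Fin 2) :
    (H.boxProd (⊤ : SimpleGraph (Fin 2))).dist p q = H.dist p.1 q.1 + kdist p.2 q.2 := by
  have htop : (⊤ : SimpleGraph (Fin 2)).Connected := connected_top
  have hconn : (H.boxProd (⊤ : SimpleGraph (Fin 2))).Connected :=
    (connected_boxProd).mpr ⟨hH, htop⟩
  apply le_antisymm
  · obtain ⟨w, hw⟩ := hH.exists_walk_length_eq_dist p.1 q.1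
    by_cases hij : p.2 = q.2
    · have : (H.boxProd (⊤ : SimpleGraph (Fin 2))).dist (p.1, p.2) (q.1, p.2) ≤
          (w.boxProdLeft _ p.2).length := dist_le _
      rw [show (w.boxProdLeft (⊤ : SimpleGraph (Fin 2)) p.2).length = w.length from Walk.length_map _ _, hw] at this
      have hk : kdist p.2 q.2 = 0 := by simp [kdist, hij]
      rw [hk]
      simp only [Prod.mk.eta] at this
      rw [hij] at this
      simp only [Prod.mk.eta] at this
      omega
    · have hadj : (H.boxProd (⊤ : SimpleGraph (Fin 2))).Adj (q.1, p.2) (q.1, q.2) := by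
        rw [boxProd_adj_right, top_adj]
        exact hij
      have : (H.boxProd (⊤ : SimpleGraph (Fin 2))).dist (p.1, p.2) (q.1, q.2) ≤
          ((w.boxProdLeft _ p.2).append hadj.toWalk).length := dist_le _
      rw [Walk.length_append, show (w.boxProdLeft (⊤ : SimpleGraph (Fin 2)) p.2).length = w.length from Walk.length_map _ _, hw] at this
      have hk : kdist p.2 q.2 = 1 := by simp [kdist, hij]
      rw [hk]
      have hb : hadj.toWalk.length = 1 := rfl
      simp only [Prod.mk.eta] at this
      omega
  · obtain ⟨w, hw⟩ := hconn.exists_walk_length_eq_dist p q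
    rw [← hw]
    exact boxProd_walk_lb hH w

end Aux4
section Aux5

variable {G : SimpleGraph V}

def kflip (i : Fin 2) : Fin 2 := if i = 0 then 1 else 0

lemma kdist_lt_iff (i j : Fin 2) : (kdist i j < kdist (kflip i) j ↔ j = i) := by
  fin_cases i <;> fin_cases j <;> simp [kdist, kflip]

lemma kflip_ne (i : Fin 2) : i ≠ kflip i := by fin_cases i <;> simp [kflip]

lemma backward_periph {W' : Type*} {H : SimpleGraph W'} (hH : IsPartialCube H)
    (e : G ≃g H.boxProd (⊤ : SimpleGraph (Fin 2))) (x : V) :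
    ∃ a b, G.Adj a b ∧ x ∈ Wside G a b ∧ Wside G a b = Uside G a b := by
  obtain ⟨hHc, -, -⟩ := hH
  set P := H.boxProd (⊤ : SimpleGraph (Fin 2)) with hP
  have hadj_flip : ∀ (z : V) (j : Fin 2), (e z).2 ≠ j → G.Adj z (e.symm ((e z).1, j)) := by
    intro z j hne
    rw [← e.map_rel_iff, e.apply_symm_apply, boxProd_adj]
    right
    exact ⟨by rw [top_adj]; exact hne, rfl⟩
  set b := e.symm ((e x).1, kflip (e x).2) with hbdef
  have heb : e b = ((e x).1, kflip (e x).2) := e.apply_symm_apply _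
  have hab : G.Adj x b := hadj_flip x (kflip (e x).2) (kflip_ne (e x).2)
  have key : ∀ z : V, z ∈ Wside G x b ↔ (e z).2 = (e x).2 := by
    intro z
    show G.dist x z < G.dist b z ↔ _
    rw [← iso_dist e x z, ← iso_dist e b z, boxProd_dist hHc (e x) (e z),
      boxProd_dist hHc (e b) (e z), heb]
    simp only
    rw [Nat.add_lt_add_iff_left]
    exact kdist_lt_iff (e x).2 (e z).2
  have key2 : ∀ z : V, z ∈ Wside G b x ↔ (e z).2 = kflip (e x).2 := by
    intro z
    show G.dist b z < G.dist x z ↔ _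
    rw [← iso_dist e x z, ← iso_dist e b z, boxProd_dist hHc (e x) (e z),
      boxProd_dist hHc (e b) (e z), heb]
    simp only
    rw [Nat.add_lt_add_iff_left]
    have h1 := kdist_lt_iff (kflip (e x).2) (e z).2
    have h2 : kflip (kflip (e x).2) = (e x).2 := by
      generalize (e x).2 = i; fin_cases i <;> simp [kflip]
    rw [h2] at h1
    exact h1
  refine ⟨x, b, hab, (key x).mpr rfl, ?_⟩
  apply Set.Subset.antisymm
  · intro z hz
    refine ⟨hz, e.symm ((e z).1, kflip (e x).2), ?_, ?_⟩
    · apply hadj_flip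
      rw [(key z).mp hz]
      exact kflip_ne (e x).2
    · rw [key2, e.apply_symm_apply]
  · intro z hz
    exact hz.1

end Aux5
section Aux6

variable {G : SimpleGraph V}

lemma exists_double_periphery [Fintype V] (hG : IsPartialCube G)
    (hper : ∀ x : V, ∃ a b, G.Adj a b ∧ x ∈ Wside G a b ∧ Wside G a b = Uside G a b) :
    ∃ a b, G.Adj a b ∧ Wside G a b = Uside G a b ∧ Wside G b a = Uside G b a := by
  classical
  obtain ⟨hconn, ⟨c, hc⟩, hcvx⟩ := id hG
  have hnev : Nonempty V := hconn.nonempty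
  by_contra hno
  push_neg at hno
  let S : V → Finset (V × V) := fun w => Finset.univ.filter (fun p : V × V =>
    G.Adj p.1 p.2 ∧ Wside G p.1 p.2 = Uside G p.1 p.2 ∧ w ∉ Wside G p.1 p.2)
  obtain ⟨w, -, hw⟩ := Finset.exists_max_image Finset.univ (fun w => (S w).card)
    Finset.univ_nonempty
  obtain ⟨a, b, hab, hwab, hWU⟩ := hper w
  have hwUm : w ∈ Uside G a b := hWU ▸ hwab
  obtain ⟨-, y, hwy, hy⟩ := hwUm
  have hsub : S w ⊂ S y := by
    constructor
    · intro p hp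
      simp only [S, Finset.mem_filter, Finset.mem_univ, true_and] at hp ⊢
      obtain ⟨hadjp, hperp, hwnot⟩ := hp
      refine ⟨hadjp, hperp, ?_⟩
      intro hyin
      have hwin : w ∈ Wside G p.2 p.1 := (mem_Wside_or hconn hc hadjp.symm w).mpr hwnot
      have heq1 : Wside G w y = Wside G a b := splits_eq hG hab hwy hwab hy
      have heq2 : Wside G w y = Wside G p.2 p.1 := splits_eq hG hadjp.symm hwy hwin hyin
      have h3 : Wside G p.1 p.2 = Wside G b a := by
        ext z
        show z ∈ Wside G p.1 p.2 ↔ z ∈ Wside G b a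
        rw [mem_Wside_or hconn hc hadjp, mem_Wside_or hconn hc hab.symm, ← heq2, heq1]
      have h4 : Wside G p.2 p.1 = Wside G a b := by rw [← heq2, heq1]
      have h5 : Uside G p.1 p.2 = Uside G b a := by unfold Uside; rw [h3, h4]
      exact hno a b hab hWU (by rw [← h3, ← h5]; exact hperp)
    · intro hsub'
      have hmem : (a, b) ∈ S y := by
        simp only [S, Finset.mem_filter, Finset.mem_univ, true_and]
        exact ⟨hab, hWU, fun hyab => Wside_disj hyab hy⟩
      have := hsub' hmem
      simp only [S, Finset.mem_filter, Finset.mem_univ, true_and] at this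
      exact this.2.2 hwab
  exact absurd (hw y (Finset.mem_univ y)) (not_le.mpr (Finset.card_lt_card hsub))

end Aux6
section Aux7

variable {G : SimpleGraph V}

lemma prism_of_double (hG : IsPartialCube G) {a b : V} (hab : G.Adj a b)
    (h1 : Wside G a b = Uside G a b) (h2 : Wside G b a = Uside G b a) :
    ∃ (W' : Type u) (H : SimpleGraph W'), IsPartialCube H ∧
      Nonempty (G ≃g H.boxProd (⊤ : SimpleGraph (Fin 2))) := by
  classical
  obtain ⟨hconn, ⟨c, hc⟩, hcvx⟩ := id hG
  have hdicho : ∀ x, x ∈ Wside G a b ↔ x ∉ Wside G b a := mem_Wside_or hconn hc hab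
  have hdicho' : ∀ x, x ∈ Wside G b a ↔ x ∉ Wside G a b := mem_Wside_or hconn hc hab.symm
  have hex : ∀ x : Wside G a b, ∃ y, G.Adj ↑x y ∧ y ∈ Wside G b a := by
    intro x
    have hx : (x : V) ∈ Uside G a b := by rw [← h1]; exact x.2
    exact hx.2
  choose f hf1 hf2 using hex
  have hex' : ∀ y : Wside G b a, ∃ z, G.Adj ↑y z ∧ z ∈ Wside G a b := by
    intro y
    have hy : (y : V) ∈ Uside G b a := by rw [← h2]; exact y.2
    exact hy.2
  choose g hg1 hg2 using hex'
  have hu1 : ∀ (x x' y : V), x ∈ Wside G a b → x' ∈ Wside G a b → y ∈ Wside G b a →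
      G.Adj x y → G.Adj x' y → x = x' :=
    fun _ _ _ hx hx' hy hxy hx'y => cross_unique hG hab hx hx' hy hxy hx'y
  have hu2 : ∀ (y y' x : V), y ∈ Wside G b a → y' ∈ Wside G b a → x ∈ Wside G a b →
      G.Adj y x → G.Adj y' x → y = y' :=
    fun _ _ _ hy hy' hx hyx hy'x => cross_unique hG hab.symm hy hy' hx hyx hy'x
  have hfg : ∀ y : Wside G b a, f ⟨g y, hg2 y⟩ = ↑y :=
    fun y => hu2 _ _ _ (hf2 ⟨g y, hg2 y⟩) y.2 (hg2 y) (hf1 ⟨g y, hg2 y⟩).symm (hg1 y)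
  have hgf : ∀ x : Wside G a b, g ⟨f x, hf2 x⟩ = ↑x :=
    fun x => hu1 _ _ _ (hg2 ⟨f x, hf2 x⟩) x.2 (hf2 x) (hg1 ⟨f x, hf2 x⟩).symm (hf1 x)
  let Efun : V → ↥(Wside G a b) × Fin 2 := fun v =>
    if h : v ∈ Wside G a b then (⟨v, h⟩, 0)
    else (⟨g ⟨v, (hdicho' v).mpr h⟩, hg2 _⟩, 1)
  let Einv : ↥(Wside G a b) × Fin 2 → V := fun p => if p.2 = 0 then (p.1 : V) else f p.1
  have hEinv0 : ∀ x : ↥(Wside G a b), Einv (x, 0) = ↑x := fun x => rfl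
  have hEinv1 : ∀ x : ↥(Wside G a b), Einv (x, 1) = f x := fun x => rfl
  have hEfun_pos : ∀ (v) (h : v ∈ Wside G a b), Efun v = (⟨v, h⟩, 0) := fun v h => dif_pos h
  have hEfun_neg : ∀ (v) (h : v ∉ Wside G a b),
      Efun v = (⟨g ⟨v, (hdicho' v).mpr h⟩, hg2 _⟩, 1) := fun v h => dif_neg h
  refine ⟨↥(Wside G a b), G.induce (Wside G a b), induce_partialCube hG hab, ⟨?_⟩⟩
  refine
    { toFun := Efun,
      invFun := Einv,
      left_inv := ?_, right_inv := ?_, map_rel_iff' := ?_ }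
  · intro v
    by_cases h : v ∈ Wside G a b
    · rw [hEfun_pos _ h, hEinv0]
    · rw [hEfun_neg _ h, hEinv1]
      exact hfg ⟨v, (hdicho' v).mpr h⟩
  · rintro ⟨x, i⟩
    by_cases hi : i = 0
    · subst hi
      rw [hEinv0, hEfun_pos _ x.2]
    · have hi1 : i = 1 := by
        have hv : i.val ≠ 0 := fun h => hi (Fin.ext h)
        have hlt := i.isLt
        exact Fin.ext (by omega)
      subst hi1
      rw [hEinv1]
      have hfs : f x ∉ Wside G a b := fun hmem => Wside_disj hmem (hf2 x)
      rw [hEfun_neg _ hfs]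
      simp only [Prod.mk.injEq]
      exact ⟨Subtype.ext (hgf x), trivial⟩
  · intro u v
    simp only [Equiv.coe_fn_mk]
    by_cases hu : u ∈ Wside G a b <;> by_cases hv : v ∈ Wside G a b
    · rw [hEfun_pos _ hu, hEfun_pos _ hv, boxProd_adj]
      simp only [comap_adj, Function.Embedding.coe_subtype, top_adj, ne_eq,
        not_true_eq_false, false_and, or_false, and_true]
    · rw [hEfun_pos _ hu, hEfun_neg _ hv, boxProd_adj]
      have hvt : v ∈ Wside G b a := (hdicho' v).mpr hv
      simp only [comap_adj, top_adj]
      constructor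
      · rintro (⟨-, h01⟩ | ⟨-, heq⟩)
        · exact absurd h01 (by decide)
        · have hug : u = g ⟨v, hvt⟩ := congrArg Subtype.val heq
          rw [hug]
          exact (hg1 ⟨v, hvt⟩).symm
      · intro hadj
        right
        refine ⟨by decide, ?_⟩
        apply Subtype.ext
        exact hu1 u (g ⟨v, hvt⟩) v hu (hg2 ⟨v, hvt⟩) hvt hadj (hg1 ⟨v, hvt⟩).symm
    · rw [hEfun_neg _ hu, hEfun_pos _ hv, boxProd_adj]
      have hut : u ∈ Wside G b a := (hdicho' u).mpr hu
      simp only [comap_adj, top_adj]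
      constructor
      · rintro (⟨-, h01⟩ | ⟨-, heq⟩)
        · exact absurd h01 (by decide)
        · have hgv : g ⟨u, hut⟩ = v := congrArg Subtype.val heq
          rw [← hgv]
          exact hg1 ⟨u, hut⟩
      · intro hadj
        right
        refine ⟨by decide, ?_⟩
        apply Subtype.ext
        exact hu1 (g ⟨u, hut⟩) v u (hg2 ⟨u, hut⟩) hv hut (hg1 ⟨u, hut⟩).symm hadj.symm
    · rw [hEfun_neg _ hu, hEfun_neg _ hv, boxProd_adj]
      have hut : u ∈ Wside G b a := (hdicho' u).mpr hu
      have hvt : v ∈ Wside G b a := (hdicho' v).mpr hv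
      simp only [comap_adj, top_adj, ne_eq, not_true_eq_false, false_and, or_false, and_true]
      constructor
      · intro hadj'
        exact match_adj hG hab (hg2 ⟨u, hut⟩) (hg2 ⟨v, hvt⟩) hut hvt
          (hg1 ⟨u, hut⟩).symm (hg1 ⟨v, hvt⟩).symm hadj'
      · intro hadj
        exact match_adj hG hab.symm hut hvt (hg2 ⟨u, hut⟩) (hg2 ⟨v, hvt⟩)
          (hg1 ⟨u, hut⟩) (hg1 ⟨v, hvt⟩) hadj

end Aux7

/-- A finite partial cube with more than one vertex is peripheral iff it is
isomorphic to the Cartesian product of a partial cube with `K₂`. -/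
theorem stmt_12 (G : SimpleGraph V) [Fintype V] (hG : IsPartialCube G)
    (hcard : 1 < Fintype.card V) :
    (∀ x : V, ∃ a b, G.Adj a b ∧ x ∈ Wside G a b ∧ Wside G a b = Uside G a b) ↔
      ∃ (W' : Type u) (H : SimpleGraph W'), IsPartialCube H ∧
        Nonempty (G ≃g H.boxProd (⊤ : SimpleGraph (Fin 2))) := by
  constructor
  · intro hper
    obtain ⟨a, b, hab, ha, hb⟩ := exists_double_periphery hG hper
    exact prism_of_double hG hab ha hb
  · rintro ⟨W', H, hH, ⟨e⟩⟩ x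
    exact backward_periph hH e x
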